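/- The RK3-2 scheme defined by k₁ = Hu + f(tₙ), k₂ = H(u + (Δt/2)k₁) + f(tₙ+Δt/2), k₃ = H(u + (Δt/2)k₂) + f(tₙ+Δt/2), u^{n+1} = u + Δt·k₃ is second-order accurate: applied to u' = Hu + f with exact data u(tₙ), the local truncation error u(tₙ+Δt) − u^{n+1} is O(Δt³) for smooth f. -/

import Mathlib

open Matrix Asymptotics Filter Topology


/-- If `g 0 = 0` and `g' =O(x^k)` near `0`, then `g =O(x^(k+1))` near `0`. -/
lemma aux_deriv_isBigO {E : Type*} [NormedAddCommGroup E] [NormedSpace ℝ E]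
    {g g' : ℝ → E} {k : ℕ}
    (hd : ∀ x, HasDerivAt g (g' x) x) (h0 : g 0 = 0)
    (hO : g' =O[𝓝 (0:ℝ)] fun x => x ^ k) :
    g =O[𝓝 (0:ℝ)] fun x => x ^ (k+1) := by
  obtain ⟨C, hCpos, hC⟩ := hO.exists_pos
  rw [isBigOWith_iff] at hC
  rw [Metric.eventually_nhds_iff] at hC
  obtain ⟨ε, hε, hball⟩ := hC
  apply IsBigO.of_bound C
  rw [Metric.eventually_nhds_iff]
  refine ⟨ε, hε, fun h hh => ?_⟩
  have key : ‖g h - g 0‖ ≤ (C * |h| ^ k) * ‖h - 0‖ := by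
    apply Convex.norm_image_sub_le_of_norm_hasDerivWithin_le
      (fun x _ => (hd x).hasDerivWithinAt) _ (convex_segment 0 h)
      (left_mem_segment ℝ 0 h) (right_mem_segment ℝ 0 h)
    intro x hx
    obtain ⟨a, b, ha, hb, hab, hx⟩ := hx
    have hxh : |x| ≤ |h| := by
      rw [← hx]
      simp only [smul_eq_mul, mul_zero, zero_add]
      rw [abs_mul]
      calc |b| * |h| ≤ 1 * |h| := by
            apply mul_le_mul_of_nonneg_right _ (abs_nonneg h)
            rw [abs_of_nonneg hb]; linarith
        _ = |h| := one_mul _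
    have hxball : dist x 0 < ε := by
      rw [Real.dist_eq, sub_zero]
      exact lt_of_le_of_lt hxh (by rwa [Real.dist_eq, sub_zero] at hh)
    calc ‖g' x‖ ≤ C * ‖x ^ k‖ := hball hxball
      _ = C * |x| ^ k := by rw [norm_pow, Real.norm_eq_abs]
      _ ≤ C * |h| ^ k := by
          exact mul_le_mul_of_nonneg_left (pow_le_pow_left₀ (abs_nonneg x) hxh k) hCpos.le
  rw [h0, sub_zero, sub_zero] at key
  calc ‖g h‖ ≤ C * |h| ^ k * ‖h‖ := key
    _ = C * ‖h ^ (k+1)‖ := by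
        simp only [Real.norm_eq_abs, pow_succ, abs_mul, abs_pow]; ring

/-- If `g` is differentiable at `t` and `φ =O(h)` tends to `0`, then
`g (t + φ h) - g t =O(h)`. -/
lemma aux_diff_isBigO {E : Type*} [NormedAddCommGroup E] [NormedSpace ℝ E]
    {g : ℝ → E} {t : ℝ} (hg : DifferentiableAt ℝ g t) {φ : ℝ → ℝ}
    (hφ : φ =O[𝓝 (0:ℝ)] fun h => h) (hφ0 : Tendsto φ (𝓝 0) (𝓝 0)) :
    (fun h => g (t + φ h) - g t) =O[𝓝 (0:ℝ)] fun h => h := by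
  have h1 : Tendsto (fun h => t + φ h) (𝓝 (0:ℝ)) (𝓝 t) := by
    simpa using tendsto_const_nhds.add hφ0
  have h2 := (hg.hasFDerivAt.isBigO_sub).comp_tendsto h1
  have h2' : (fun h => g (t + φ h) - g t) =O[𝓝 (0:ℝ)] φ := by
    have h3 : ((fun x => x - t) ∘ fun h => t + φ h) = φ := by funext h; simp
    simpa [Function.comp_def, h3] using h2
  exact h2'.trans hφ

/-- Second-order Taylor remainder at order 1 with half step. -/
lemma taylor1_half_isBigO {E : Type*} [NormedAddCommGroup E] [NormedSpace ℝ E]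
    {g dg : ℝ → E} {t : ℝ}
    (h1 : ∀ s, HasDerivAt g (dg s) s) (h2 : DifferentiableAt ℝ dg t) :
    (fun h : ℝ => g (t + h/2) - g t - (h/2) • dg t) =O[𝓝 (0:ℝ)] fun h => h^2 := by
  have hφ : (fun h : ℝ => h/2) =O[𝓝 (0:ℝ)] fun h => h := by
    apply IsBigO.of_bound 1
    filter_upwards with h
    rw [Real.norm_eq_abs, Real.norm_eq_abs, abs_div, abs_two, one_mul]
    exact half_le_self (abs_nonneg _)
  have hφ0 : Tendsto (fun h : ℝ => h/2) (𝓝 0) (𝓝 0) := by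
    simpa using Tendsto.div_const (tendsto_id : Tendsto id (𝓝 (0:ℝ)) (𝓝 0)) 2
  have hder : ∀ h : ℝ, HasDerivAt (fun h : ℝ => g (t + h/2) - g t - (h/2) • dg t)
      ((1/2 : ℝ) • dg (t + h/2) - (1/2 : ℝ) • dg t) h := by
    intro h
    have inner : HasDerivAt (fun h : ℝ => t + h/2) (1/2) h :=
      ((hasDerivAt_id h).div_const 2).const_add t
    have i1 : HasDerivAt (fun h : ℝ => g (t + h/2)) ((1/2 : ℝ) • dg (t + h/2)) h := by
      simpa [Function.comp_def] using (h1 (t + h/2)).scomp h inner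
    have i2 : HasDerivAt (fun h : ℝ => (h/2) • dg t) ((1/2 : ℝ) • dg t) h := by
      simpa using ((hasDerivAt_id h).div_const 2).smul_const (dg t)
    simpa [Pi.sub_def] using (i1.sub_const (g t)).sub i2
  have hO : (fun h : ℝ => (1/2 : ℝ) • dg (t + h/2) - (1/2 : ℝ) • dg t)
      =O[𝓝 (0:ℝ)] fun h => h ^ 1 := by
    have := (aux_diff_isBigO h2 hφ hφ0).const_smul_left (1/2 : ℝ)
    simpa using this.congr_left fun h => by simp [smul_sub]
  have := aux_deriv_isBigO hder (by simp) hO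
  simpa using this

/-- Taylor remainder at order 2. -/
lemma taylor2_isBigO {E : Type*} [NormedAddCommGroup E] [NormedSpace ℝ E]
    {u du d2u : ℝ → E} {t : ℝ}
    (h1 : ∀ s, HasDerivAt u (du s) s) (h2 : ∀ s, HasDerivAt du (d2u s) s)
    (h3 : DifferentiableAt ℝ d2u t) :
    (fun h : ℝ => u (t + h) - u t - h • du t - (h^2/2) • d2u t)
      =O[𝓝 (0:ℝ)] fun h => h^3 := by
  have hshift : ∀ (v dv : ℝ → E), (∀ s, HasDerivAt v (dv s) s) →
      ∀ h : ℝ, HasDerivAt (fun h : ℝ => v (t + h)) (dv (t + h)) h := by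
    intro v dv hv h
    simpa [Function.comp_def] using (hv (t + h)).scomp h ((hasDerivAt_id h).const_add t)
  have hr1 : (fun h : ℝ => du (t + h) - du t - h • d2u t) =O[𝓝 (0:ℝ)] fun h => h^2 := by
    have hder : ∀ h : ℝ, HasDerivAt (fun h : ℝ => du (t + h) - du t - h • d2u t)
        (d2u (t + h) - d2u t) h := by
      intro h
      simpa [Pi.sub_def] using ((hshift du d2u h2 h).sub_const (du t)).sub
        ((hasDerivAt_id h).smul_const (d2u t))
    have hO : (fun h : ℝ => d2u (t + h) - d2u t) =O[𝓝 (0:ℝ)] fun h => h ^ 1 := by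
      simpa using aux_diff_isBigO h3 (isBigO_refl (fun h : ℝ => h) _) tendsto_id
    simpa using aux_deriv_isBigO hder (by simp) hO
  have hder : ∀ h : ℝ, HasDerivAt (fun h : ℝ => u (t + h) - u t - h • du t - (h^2/2) • d2u t)
      (du (t + h) - du t - h • d2u t) h := by
    intro h
    have i1 : HasDerivAt (fun h : ℝ => (h^2/2) • d2u t) (h • d2u t) h := by
      have := ((hasDerivAt_pow 2 h).div_const 2).smul_const (d2u t)
      convert this using 1
      match_scalars
      ring
    simpa [Pi.sub_def] using (((hshift u du h1 h).sub_const (u t)).sub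
      ((hasDerivAt_id h).smul_const (du t))).sub i1
  simpa using aux_deriv_isBigO hder (by simp) hr1

/-- The RK3-2 scheme is second-order accurate: the local truncation error for
`u' = Hu + f`, starting from exact data `u(tₙ)`, is `O(Δt³)`. -/
theorem rk32_local_truncation_error
    {n : ℕ} (H : Matrix (Fin n) (Fin n) ℝ) (f : ℝ → Fin n → ℝ)
    (hf : ContDiff ℝ 2 f) (u : ℝ → Fin n → ℝ)
    (hu : ∀ t, HasDerivAt u (H *ᵥ u t + f t) t) (tn : ℝ) :
    (fun Δt : ℝ =>
        u (tn + Δt) -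
          (u tn + Δt •
            (H *ᵥ (u tn + (Δt / 2) •
              (H *ᵥ (u tn + (Δt / 2) • (H *ᵥ u tn + f tn)) + f (tn + Δt / 2)))
              + f (tn + Δt / 2))))
      =O[𝓝 (0 : ℝ)] fun Δt : ℝ => Δt ^ 3 := by
  -- regularity of f
  rw [show (2 : WithTop ℕ∞) = 1 + 1 from rfl] at hf
  obtain ⟨hfd, -, hf1⟩ := contDiff_succ_iff_deriv.mp hf
  have hf1d : Differentiable ℝ (deriv f) := hf1.differentiable one_ne_zero
  have hud : Differentiable ℝ u := fun s => (hu s).differentiableAt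
  -- the matrix as a continuous linear map
  set L : (Fin n → ℝ) →L[ℝ] (Fin n → ℝ) :=
    LinearMap.toContinuousLinearMap (Matrix.mulVecLin H) with hLdef
  have hL : ∀ x, H *ᵥ x = L x := fun x => by
    simp [hLdef, Matrix.mulVecLin_apply]
  -- derivatives of u
  have hdu : ∀ s, HasDerivAt u (L (u s) + f s) s := fun s => by
    rw [← hL]; exact hu s
  have hd2u : ∀ s, HasDerivAt (fun s => L (u s) + f s)
      (L (L (u s)) + L (f s) + deriv f s) s := by
    intro s
    have h1 : HasDerivAt (fun s => L (u s)) (L (L (u s) + f s)) s :=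
      L.hasFDerivAt.comp_hasDerivAt s (hdu s)
    have := h1.add (hfd s).hasDerivAt
    rw [map_add] at this
    exact this
  have hd3 : DifferentiableAt ℝ (fun s => L (L (u s)) + L (f s) + deriv f s) tn :=
    (((L.differentiable.comp (L.differentiable.comp hud)).add
      (L.differentiable.comp hfd)).add hf1d).differentiableAt
  -- the four pieces
  have hr : (fun h : ℝ => u (tn + h) - u tn - h • (L (u tn) + f tn)
      - (h^2/2) • (L (L (u tn)) + L (f tn) + deriv f tn)) =O[𝓝 (0:ℝ)] fun h => h^3 :=
    taylor2_isBigO hdu hd2u hd3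
  have hρ : (fun h : ℝ => f (tn + h/2) - f tn - (h/2) • deriv f tn)
      =O[𝓝 (0:ℝ)] fun h => h^2 :=
    taylor1_half_isBigO (fun s => (hfd s).hasDerivAt) (hf1d tn)
  have hφ : (fun h : ℝ => h/2) =O[𝓝 (0:ℝ)] fun h => h := by
    apply IsBigO.of_bound 1
    filter_upwards with h
    rw [Real.norm_eq_abs, Real.norm_eq_abs, abs_div, abs_two, one_mul]
    exact half_le_self (abs_nonneg _)
  have hφ0 : Tendsto (fun h : ℝ => h/2) (𝓝 0) (𝓝 0) := by
    simpa using Tendsto.div_const (tendsto_id : Tendsto id (𝓝 (0:ℝ)) (𝓝 0)) 2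
  have hδ : (fun h : ℝ => f (tn + h/2) - f tn) =O[𝓝 (0:ℝ)] fun h => h :=
    aux_diff_isBigO (hfd tn) hφ hφ0
  -- term 2 : h • ρ h
  have ht2 : (fun h : ℝ => h • (f (tn + h/2) - f tn - (h/2) • deriv f tn))
      =O[𝓝 (0:ℝ)] fun h => h^3 := by
    have := (isBigO_refl (fun h : ℝ => h) (𝓝 (0:ℝ))).smul hρ
    exact this.congr_right fun h => by rw [smul_eq_mul, ← pow_succ']
  -- term 3 : (h^2/2) • L (δ h)
  have ht3 : (fun h : ℝ => (h^2/2) • L (f (tn + h/2) - f tn))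
      =O[𝓝 (0:ℝ)] fun h => h^3 := by
    have hk : (fun h : ℝ => h^2/2) =O[𝓝 (0:ℝ)] fun h => h^2 := by
      apply IsBigO.of_bound 1
      filter_upwards with h
      rw [Real.norm_eq_abs, Real.norm_eq_abs, abs_div, abs_two, one_mul]
      exact half_le_self (abs_nonneg _)
    have hLδ : (fun h : ℝ => L (f (tn + h/2) - f tn)) =O[𝓝 (0:ℝ)] fun h => h :=
      (L.isBigO_comp _ _).trans hδ
    exact (hk.smul hLδ).congr_right fun h => by rw [smul_eq_mul, ← pow_succ]
  -- term 4 : (h^3/4) • const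
  have ht4 : (fun h : ℝ => (h^3/4) • L (L (L (u tn) + f tn)))
      =O[𝓝 (0:ℝ)] fun h => h^3 := by
    apply IsBigO.of_bound ‖L (L (L (u tn) + f tn))‖
    filter_upwards with h
    rw [norm_smul, Real.norm_eq_abs, Real.norm_eq_abs, abs_div]
    have h1 : |h ^ 3| / |4| ≤ |h ^ 3| := by
      rw [show |(4:ℝ)| = 4 by norm_num]
      nlinarith [abs_nonneg (h^3)]
    nlinarith [abs_nonneg (h^3), norm_nonneg (L (L (L (u tn) + f tn))), abs_nonneg (h^3/4),
      mul_le_mul_of_nonneg_right h1 (norm_nonneg (L (L (L (u tn) + f tn))))]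
  -- algebraic decomposition of the truncation error
  have key : (fun Δt : ℝ =>
        u (tn + Δt) -
          (u tn + Δt •
            (H *ᵥ (u tn + (Δt / 2) •
              (H *ᵥ (u tn + (Δt / 2) • (H *ᵥ u tn + f tn)) + f (tn + Δt / 2)))
              + f (tn + Δt / 2))))
      = fun h : ℝ =>
        (u (tn + h) - u tn - h • (L (u tn) + f tn)
            - (h^2/2) • (L (L (u tn)) + L (f tn) + deriv f tn))
          - h • (f (tn + h/2) - f tn - (h/2) • deriv f tn)
          - (h^2/2) • L (f (tn + h/2) - f tn)
          - (h^3/4) • L (L (L (u tn) + f tn)) := by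
    funext h
    simp only [hL, map_add, _root_.map_smul, map_sub]
    module
  rw [key]
  exact ((hr.sub ht2).sub ht3).sub ht4
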